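/- A class β ∈ L satisfies β·β = −1 and β·K = −1 (where K = −3l + e_1 + ... + e_6) if and only if β is one of the 27 classes e_i (1 ≤ i ≤ 6), l − e_i − e_j (1 ≤ i < j ≤ 6), or 2l − Σ_{i≠j} e_i (1 ≤ j ≤ 6). In particular there are exactly 27 such classes. -/

import Mathlib

/-- The Picard lattice `L = ℤl ⊕ ℤe₁ ⊕ ⋯ ⊕ ℤe₆` of a cubic surface,
coordinates: index 0 is `l`, indices 1..6 are `e₁,…,e₆`. -/
abbrev PicL : Type := Fin 7 → ℤ

/-- The intersection form: `l·l = 1`, `eᵢ·eᵢ = -1`, other basis pairings `0`. -/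
def inter (x y : PicL) : ℤ := x 0 * y 0 - ∑ i : Fin 6, x i.succ * y i.succ

/-- The hyperplane class `l`. -/
def lvec : PicL := ![1, 0, 0, 0, 0, 0, 0]

/-- The exceptional class `e_{i+1}` for `i : Fin 6`. -/
def evec (i : Fin 6) : PicL := Pi.single i.succ 1

/-- The canonical class `K = -3l + e₁ + ⋯ + e₆`. -/
def Kvec : PicL := (-3 : ℤ) • lvec + ∑ i : Fin 6, evec i

/-- The anticanonical class `h = -K = 3l - e₁ - ⋯ - e₆`. -/
def hvec : PicL := (3 : ℤ) • lvec - ∑ i : Fin 6, evec i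

/-- The set of the 27 classes of lines on the cubic surface:
`eᵢ`, `l - eᵢ - eⱼ` (i < j), and `2l - ∑_{i≠j} eᵢ`. -/
def lineSet : Set PicL :=
  {β | (∃ i : Fin 6, β = evec i) ∨
       (∃ i j : Fin 6, i < j ∧ β = lvec - evec i - evec j) ∨
       (∃ j : Fin 6, β = (2 : ℤ) • lvec - (∑ i : Fin 6, evec i) + evec j)}

/-- The Weyl group generator `s₆`: the unique linear extension of
`e₁ ↦ l - e₂ - e₃`, `e₂ ↦ l - e₁ - e₃`, `e₃ ↦ l - e₁ - e₂`,
`l ↦ 2l - e₁ - e₂ - e₃`, `eᵢ ↦ eᵢ` for `i = 4,5,6`. -/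
def s6 (x : PicL) : PicL :=
  ![2 * x 0 + x 1 + x 2 + x 3,
    -(x 0) - x 2 - x 3,
    -(x 0) - x 1 - x 3,
    -(x 0) - x 1 - x 2,
    x 4, x 5, x 6]

/-- The classes `c₁,…,c₉ ∈ PicL` of the nine torus-invariant curves of the
nef toric surface `S₃⁰` under the identification `Pic(S₃⁰) ≅ Pic(S₃)`:
`c₁ = e₂ - e₅`, `c₂ = l - e₂ - e₃ - e₆`, `c₃ = e₆`, `c₄ = e₃ - e₆`,
`c₅ = l - e₁ - e₃ - e₄`, `c₆ = e₄`, `c₇ = e₁ - e₄`,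
`c₈ = l - e₁ - e₂ - e₅`, `c₉ = e₅` (here indexed by `Fin 9`, `0`-based). -/
def cvec : Fin 9 → PicL :=
  ![evec 1 - evec 4,
    lvec - evec 1 - evec 2 - evec 5,
    evec 5,
    evec 2 - evec 5,
    lvec - evec 0 - evec 2 - evec 3,
    evec 3,
    evec 0 - evec 3,
    lvec - evec 0 - evec 1 - evec 4,
    evec 4]

/- ### Auxiliary material for the proof -/

lemma le_mul_self' (t : ℤ) : t ≤ t * t := by
  rcases le_or_gt t 0 with h | h
  · exact h.trans (mul_self_nonneg t)
  · nlinarith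

lemma neg_le_mul_self' (t : ℤ) : -t ≤ t * t := by
  rcases le_or_gt 0 t with h | h
  · exact (neg_nonpos.mpr h).trans (mul_self_nonneg t)
  · nlinarith

lemma sq_eq_self_cases {a : ℤ} (h : a * a - a = 0) : a = 0 ∨ a = 1 := by
  rcases mul_eq_zero.mp (show a * (a - 1) = 0 by linear_combination h) with h | h
  · exact Or.inl h
  · exact Or.inr (by omega)

lemma sq_eq_negself_cases {a : ℤ} (h : a * a + a = 0) : a = 0 ∨ a = -1 := by
  rcases mul_eq_zero.mp (show a * (a + 1) = 0 by linear_combination h) with h | h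
  · exact Or.inl h
  · exact Or.inr (by omega)


set_option maxHeartbeats 1600000 in
lemma memCase0 (b1 b2 b3 b4 b5 b6 : ℤ)
    (hs : b1 + b2 + b3 + b4 + b5 + b6 = 1)
    (hq : b1*b1 + b2*b2 + b3*b3 + b4*b4 + b5*b5 + b6*b6 = 1) :
    (![0, b1, b2, b3, b4, b5, b6] : PicL) ∈ lineSet := by
  have c1 : b1 = 0 ∨ b1 = 1 := sq_eq_self_cases (by
    linarith [le_mul_self' b2, le_mul_self' b3, le_mul_self' b4, le_mul_self' b5, le_mul_self' b6, le_mul_self' b1])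
  have c2 : b2 = 0 ∨ b2 = 1 := sq_eq_self_cases (by
    linarith [le_mul_self' b1, le_mul_self' b3, le_mul_self' b4, le_mul_self' b5, le_mul_self' b6, le_mul_self' b2])
  have c3 : b3 = 0 ∨ b3 = 1 := sq_eq_self_cases (by
    linarith [le_mul_self' b1, le_mul_self' b2, le_mul_self' b4, le_mul_self' b5, le_mul_self' b6, le_mul_self' b3])
  have c4 : b4 = 0 ∨ b4 = 1 := sq_eq_self_cases (by
    linarith [le_mul_self' b1, le_mul_self' b2, le_mul_self' b3, le_mul_self' b5, le_mul_self' b6, le_mul_self' b4])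
  have c5 : b5 = 0 ∨ b5 = 1 := sq_eq_self_cases (by
    linarith [le_mul_self' b1, le_mul_self' b2, le_mul_self' b3, le_mul_self' b4, le_mul_self' b6, le_mul_self' b5])
  have c6 : b6 = 0 ∨ b6 = 1 := sq_eq_self_cases (by
    linarith [le_mul_self' b1, le_mul_self' b2, le_mul_self' b3, le_mul_self' b4, le_mul_self' b5, le_mul_self' b6])
  clear hq
  rcases c1 with rfl | rfl <;> rcases c2 with rfl | rfl <;> rcases c3 with rfl | rfl <;>
    rcases c4 with rfl | rfl <;> rcases c5 with rfl | rfl <;> rcases c6 with rfl | rfl <;>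
    first
      | omega
      | (unfold lineSet; simp only [Set.mem_setOf_eq]; decide)

set_option maxHeartbeats 1600000 in
lemma memCase1 (b1 b2 b3 b4 b5 b6 : ℤ)
    (hs : b1 + b2 + b3 + b4 + b5 + b6 = -2)
    (hq : b1*b1 + b2*b2 + b3*b3 + b4*b4 + b5*b5 + b6*b6 = 2) :
    (![1, b1, b2, b3, b4, b5, b6] : PicL) ∈ lineSet := by
  have c1 : b1 = 0 ∨ b1 = -1 := sq_eq_negself_cases (by
    linarith [neg_le_mul_self' b2, neg_le_mul_self' b3, neg_le_mul_self' b4, neg_le_mul_self' b5, neg_le_mul_self' b6, neg_le_mul_self' b1])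
  have c2 : b2 = 0 ∨ b2 = -1 := sq_eq_negself_cases (by
    linarith [neg_le_mul_self' b1, neg_le_mul_self' b3, neg_le_mul_self' b4, neg_le_mul_self' b5, neg_le_mul_self' b6, neg_le_mul_self' b2])
  have c3 : b3 = 0 ∨ b3 = -1 := sq_eq_negself_cases (by
    linarith [neg_le_mul_self' b1, neg_le_mul_self' b2, neg_le_mul_self' b4, neg_le_mul_self' b5, neg_le_mul_self' b6, neg_le_mul_self' b3])
  have c4 : b4 = 0 ∨ b4 = -1 := sq_eq_negself_cases (by
    linarith [neg_le_mul_self' b1, neg_le_mul_self' b2, neg_le_mul_self' b3, neg_le_mul_self' b5, neg_le_mul_self' b6, neg_le_mul_self' b4])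
  have c5 : b5 = 0 ∨ b5 = -1 := sq_eq_negself_cases (by
    linarith [neg_le_mul_self' b1, neg_le_mul_self' b2, neg_le_mul_self' b3, neg_le_mul_self' b4, neg_le_mul_self' b6, neg_le_mul_self' b5])
  have c6 : b6 = 0 ∨ b6 = -1 := sq_eq_negself_cases (by
    linarith [neg_le_mul_self' b1, neg_le_mul_self' b2, neg_le_mul_self' b3, neg_le_mul_self' b4, neg_le_mul_self' b5, neg_le_mul_self' b6])
  clear hq
  rcases c1 with rfl | rfl <;> rcases c2 with rfl | rfl <;> rcases c3 with rfl | rfl <;>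
    rcases c4 with rfl | rfl <;> rcases c5 with rfl | rfl <;> rcases c6 with rfl | rfl <;>
    first
      | omega
      | (unfold lineSet; simp only [Set.mem_setOf_eq]; decide)

set_option maxHeartbeats 1600000 in
lemma memCase2 (b1 b2 b3 b4 b5 b6 : ℤ)
    (hs : b1 + b2 + b3 + b4 + b5 + b6 = -5)
    (hq : b1*b1 + b2*b2 + b3*b3 + b4*b4 + b5*b5 + b6*b6 = 5) :
    (![2, b1, b2, b3, b4, b5, b6] : PicL) ∈ lineSet := by
  have c1 : b1 = 0 ∨ b1 = -1 := sq_eq_negself_cases (by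
    linarith [neg_le_mul_self' b2, neg_le_mul_self' b3, neg_le_mul_self' b4, neg_le_mul_self' b5, neg_le_mul_self' b6, neg_le_mul_self' b1])
  have c2 : b2 = 0 ∨ b2 = -1 := sq_eq_negself_cases (by
    linarith [neg_le_mul_self' b1, neg_le_mul_self' b3, neg_le_mul_self' b4, neg_le_mul_self' b5, neg_le_mul_self' b6, neg_le_mul_self' b2])
  have c3 : b3 = 0 ∨ b3 = -1 := sq_eq_negself_cases (by
    linarith [neg_le_mul_self' b1, neg_le_mul_self' b2, neg_le_mul_self' b4, neg_le_mul_self' b5, neg_le_mul_self' b6, neg_le_mul_self' b3])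
  have c4 : b4 = 0 ∨ b4 = -1 := sq_eq_negself_cases (by
    linarith [neg_le_mul_self' b1, neg_le_mul_self' b2, neg_le_mul_self' b3, neg_le_mul_self' b5, neg_le_mul_self' b6, neg_le_mul_self' b4])
  have c5 : b5 = 0 ∨ b5 = -1 := sq_eq_negself_cases (by
    linarith [neg_le_mul_self' b1, neg_le_mul_self' b2, neg_le_mul_self' b3, neg_le_mul_self' b4, neg_le_mul_self' b6, neg_le_mul_self' b5])
  have c6 : b6 = 0 ∨ b6 = -1 := sq_eq_negself_cases (by
    linarith [neg_le_mul_self' b1, neg_le_mul_self' b2, neg_le_mul_self' b3, neg_le_mul_self' b4, neg_le_mul_self' b5, neg_le_mul_self' b6])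
  clear hq
  rcases c1 with rfl | rfl <;> rcases c2 with rfl | rfl <;> rcases c3 with rfl | rfl <;>
    rcases c4 with rfl | rfl <;> rcases c5 with rfl | rfl <;> rcases c6 with rfl | rfl <;>
    first
      | omega
      | (unfold lineSet; simp only [Set.mem_setOf_eq]; decide)

/-- The 27 lines as a `Finset`. -/
def lineFinset : Finset PicL :=
  (Finset.univ.image evec) ∪
  ((Finset.univ.filter (fun p : Fin 6 × Fin 6 => p.1 < p.2)).image
    (fun p => lvec - evec p.1 - evec p.2)) ∪
  (Finset.univ.image (fun j : Fin 6 => (2 : ℤ) • lvec - (∑ i : Fin 6, evec i) + evec j))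

lemma lineSet_eq_coe : lineSet = ↑lineFinset := by
  ext β
  constructor
  · rintro (⟨i, rfl⟩ | ⟨i, j, hij, rfl⟩ | ⟨j, rfl⟩)
    · exact Finset.mem_coe.mpr (Finset.mem_union_left _ (Finset.mem_union_left _
        (Finset.mem_image_of_mem _ (Finset.mem_univ i))))
    · refine Finset.mem_coe.mpr (Finset.mem_union_left _ (Finset.mem_union_right _ ?_))
      exact Finset.mem_image.mpr ⟨(i, j), Finset.mem_filter.mpr ⟨Finset.mem_univ _, hij⟩, rfl⟩
    · exact Finset.mem_coe.mpr (Finset.mem_union_right _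
        (Finset.mem_image_of_mem _ (Finset.mem_univ j)))
  · intro h
    rcases Finset.mem_union.mp (Finset.mem_coe.mp h) with h | h
    · rcases Finset.mem_union.mp h with h | h
      · obtain ⟨i, -, rfl⟩ := Finset.mem_image.mp h
        exact Or.inl ⟨i, rfl⟩
      · obtain ⟨⟨i, j⟩, hm, rfl⟩ := Finset.mem_image.mp h
        exact Or.inr (Or.inl ⟨i, j, (Finset.mem_filter.mp hm).2, rfl⟩)
    · obtain ⟨j, -, rfl⟩ := Finset.mem_image.mp h
      exact Or.inr (Or.inr ⟨j, rfl⟩)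

set_option maxHeartbeats 1600000 in
/-- A class β satisfies β·β = -1 and β·K = -1 iff β is one of the 27 line
classes; in particular there are exactly 27 such classes. -/
theorem lines_characterization :
    (∀ β : PicL, (inter β β = -1 ∧ inter β Kvec = -1) ↔ β ∈ lineSet) ∧
      lineSet.ncard = 27 := by
  constructor
  · intro β
    constructor
    · rintro ⟨h1, h2⟩
      have hK : Kvec = ![-3, 1, 1, 1, 1, 1, 1] := by decide
      rw [hK] at h2
      simp only [inter, Fin.sum_univ_six,
        show ((0:Fin 6).succ : Fin 7) = 1 from rfl, show ((1:Fin 6).succ : Fin 7) = 2 from rfl,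
        show ((2:Fin 6).succ : Fin 7) = 3 from rfl, show ((3:Fin 6).succ : Fin 7) = 4 from rfl,
        show ((4:Fin 6).succ : Fin 7) = 5 from rfl, show ((5:Fin 6).succ : Fin 7) = 6 from rfl]
        at h1 h2
      norm_num [show (![-3,1,1,1,1,1,1] : PicL) 2 = 1 from rfl,
        show (![-3,1,1,1,1,1,1] : PicL) 3 = 1 from rfl,
        show (![-3,1,1,1,1,1,1] : PicL) 4 = 1 from rfl,
        show (![-3,1,1,1,1,1,1] : PicL) 5 = 1 from rfl,
        show (![-3,1,1,1,1,1,1] : PicL) 6 = 1 from rfl] at h2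
      obtain ⟨d, hd⟩ : ∃ d, β 0 = d := ⟨_, rfl⟩
      obtain ⟨b1, e1⟩ : ∃ b, β 1 = b := ⟨_, rfl⟩
      obtain ⟨b2, e2⟩ : ∃ b, β 2 = b := ⟨_, rfl⟩
      obtain ⟨b3, e3⟩ : ∃ b, β 3 = b := ⟨_, rfl⟩
      obtain ⟨b4, e4⟩ : ∃ b, β 4 = b := ⟨_, rfl⟩
      obtain ⟨b5, e5⟩ : ∃ b, β 5 = b := ⟨_, rfl⟩
      obtain ⟨b6, e6⟩ : ∃ b, β 6 = b := ⟨_, rfl⟩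
      rw [hd, e1, e2, e3, e4, e5, e6] at h1 h2
      have hβ : β = ![d, b1, b2, b3, b4, b5, b6] := by
        funext j; fin_cases j <;> simp [hd, e1, e2, e3, e4, e5, e6] <;> rfl
      have hs : b1 + b2 + b3 + b4 + b5 + b6 = 1 - 3 * d := by linarith
      have hq : b1*b1 + b2*b2 + b3*b3 + b4*b4 + b5*b5 + b6*b6 = d * d + 1 := by linarith
      have hcs : (b1 + b2 + b3 + b4 + b5 + b6) ^ 2
          ≤ 6 * (b1*b1 + b2*b2 + b3*b3 + b4*b4 + b5*b5 + b6*b6) := by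
        nlinarith [sq_nonneg (b1-b2), sq_nonneg (b1-b3), sq_nonneg (b1-b4), sq_nonneg (b1-b5),
          sq_nonneg (b1-b6), sq_nonneg (b2-b3), sq_nonneg (b2-b4), sq_nonneg (b2-b5),
          sq_nonneg (b2-b6), sq_nonneg (b3-b4), sq_nonneg (b3-b5), sq_nonneg (b3-b6),
          sq_nonneg (b4-b5), sq_nonneg (b4-b6), sq_nonneg (b5-b6)]
      have hdineq : 3 * d * d - 6 * d - 5 ≤ 0 := by nlinarith [hcs]
      have hdlow : 0 ≤ d := by nlinarith [sq_nonneg (d + 1)]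
      have hdhigh : d ≤ 2 := by nlinarith [sq_nonneg (d - 3)]
      rw [hβ]
      interval_cases d
      · exact memCase0 b1 b2 b3 b4 b5 b6 (by linarith) (by linarith)
      · exact memCase1 b1 b2 b3 b4 b5 b6 (by linarith) (by linarith)
      · exact memCase2 b1 b2 b3 b4 b5 b6 (by linarith) (by linarith)
    · rintro (⟨i, rfl⟩ | ⟨i, j, hij, rfl⟩ | ⟨j, rfl⟩)
      · revert i; decide
      · revert i j; decide
      · revert j; decide
  · rw [lineSet_eq_coe, Set.ncard_coe_finset]
    decide
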